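/- Let L : ℝ × U → ℝ, (λ,S,P) ↦ L(λ,S,P), be C¹ in λ and C¹ in (S,P), on a domain with P ≠ 0, such that the mixed partials ∂_λ∂_S L and ∂_λ∂_P L exist and equal ∂_S∂_λ L and ∂_P∂_λ L. Write O = ∂_λ L and suppose the duality-invariance condition L_S·O_S − (S/P)·(L_P·O_S + L_S·O_P) − L_P·O_P = 0 holds for all λ. If L(0,·,·) satisfies the self-duality equation L_S² − (2S/P)·L_S·L_P − L_P² = 1, then L(λ,·,·) satisfies the same self-duality equation for every λ. -/

import Mathlib

/-- A flow driven by a duality-invariant operator O = ∂_λ L preserves the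
self-duality equation: if L(0,·,·) is self-dual, so is L(λ,·,·) for every λ. -/
theorem flow_preserves_duality (L : ℝ → ℝ → ℝ → ℝ) (U : Set (ℝ × ℝ))
    (hP : ∀ p ∈ U, p.2 ≠ 0)
    (hC1lam : ∀ l : ℝ, ∀ p ∈ U, DifferentiableAt ℝ (fun l' => L l' p.1 p.2) l)
    (hC1SP : ∀ l : ℝ, ∀ p ∈ U, DifferentiableAt ℝ (fun x : ℝ × ℝ => L l x.1 x.2) p)
    (hmixS : ∀ l : ℝ, ∀ p ∈ U,
      HasDerivAt (fun l' => deriv (fun s => L l' s p.2) p.1)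
        (deriv (fun s => deriv (fun l' => L l' s p.2) l) p.1) l)
    (hmixP : ∀ l : ℝ, ∀ p ∈ U,
      HasDerivAt (fun l' => deriv (fun t => L l' p.1 t) p.2)
        (deriv (fun t => deriv (fun l' => L l' p.1 t) l) p.2) l)
    (hinv : ∀ l : ℝ, ∀ p ∈ U,
      deriv (fun s => L l s p.2) p.1 * deriv (fun s => deriv (fun l' => L l' s p.2) l) p.1
        - (p.1 / p.2) *
            (deriv (fun t => L l p.1 t) p.2 *
                deriv (fun s => deriv (fun l' => L l' s p.2) l) p.1
              + deriv (fun s => L l s p.2) p.1 *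
                deriv (fun t => deriv (fun l' => L l' p.1 t) l) p.2)
        - deriv (fun t => L l p.1 t) p.2 *
            deriv (fun t => deriv (fun l' => L l' p.1 t) l) p.2 = 0)
    (h0 : ∀ p ∈ U,
      (deriv (fun s => L 0 s p.2) p.1) ^ 2
        - (2 * p.1 / p.2) * deriv (fun s => L 0 s p.2) p.1 * deriv (fun t => L 0 p.1 t) p.2
        - (deriv (fun t => L 0 p.1 t) p.2) ^ 2 = 1) :
    ∀ l : ℝ, ∀ p ∈ U,
      (deriv (fun s => L l s p.2) p.1) ^ 2
        - (2 * p.1 / p.2) * deriv (fun s => L l s p.2) p.1 * deriv (fun t => L l p.1 t) p.2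
        - (deriv (fun t => L l p.1 t) p.2) ^ 2 = 1 := by
  intro l p hp
  set f : ℝ → ℝ := fun l' => deriv (fun s => L l' s p.2) p.1 with hf
  set g : ℝ → ℝ := fun l' => deriv (fun t => L l' p.1 t) p.2 with hg
  set QQ : ℝ → ℝ := fun l' => f l' ^ 2 - (2 * p.1 / p.2) * f l' * g l' - g l' ^ 2 with hQ
  have hQder : ∀ l' : ℝ, HasDerivAt QQ 0 l' := by
    intro l'
    have hfd := hmixS l' p hp
    have hgd := hmixP l' p hp
    have h : HasDerivAt QQ
        (2 * f l' * (deriv (fun s => deriv (fun l'' => L l'' s p.2) l') p.1)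
          - (2 * p.1 / p.2) * ((deriv (fun s => deriv (fun l'' => L l'' s p.2) l') p.1) * g l'
              + f l' * (deriv (fun t => deriv (fun l'' => L l'' p.1 t) l') p.2))
          - 2 * g l' * (deriv (fun t => deriv (fun l'' => L l'' p.1 t) l') p.2)) l' := by
      have h1 := (hfd.pow 2)
      have h2 := ((hasDerivAt_const l' (2 * p.1 / p.2)).mul hfd).mul hgd
      have h3 := (hgd.pow 2)
      have := (h1.sub h2).sub h3
      refine this.congr_deriv ?_
      simp only [hf, hg, Pi.mul_apply]
      ring
    have hz := hinv l' p hp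
    have : (2 * f l' * (deriv (fun s => deriv (fun l'' => L l'' s p.2) l') p.1)
          - (2 * p.1 / p.2) * ((deriv (fun s => deriv (fun l'' => L l'' s p.2) l') p.1) * g l'
              + f l' * (deriv (fun t => deriv (fun l'' => L l'' p.1 t) l') p.2))
          - 2 * g l' * (deriv (fun t => deriv (fun l'' => L l'' p.1 t) l') p.2)) = 0 := by
      simp only [hf, hg]
      linear_combination 2 * hz
    rwa [this] at h
  have hconst : QQ l = QQ 0 :=
    is_const_of_deriv_eq_zero (fun x => (hQder x).differentiableAt)
      (fun x => (hQder x).deriv) l 0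
  have h0' := h0 p hp
  simpa [hQ, hf, hg, h0'] using hconst
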